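/- Policy gradient theorem for directional derivatives: For policies π^{t+1}, π^t in a finite discounted MDP, the directional derivative of the performance V_ρ^π at π^t in the direction π^{t+1} − π^t equals E_{s ∼ d^{π^t}_ρ} [⟨Q_s^{π^t}, π_s^{t+1} − π_s^t⟩] up to the 1/(1−γ) factor; equivalently, V_ρ^{π^{t+1}} − V_ρ^{π^t} = (1/(1−γ)) E_{s∼d^{π^t}_ρ}[⟨Q_s^{π^t}, π_s^{t+1} − π_s^t⟩] + O(‖π^{t+1} − π^t‖²). -/

import Mathlib

open Finset

/-- The probability simplex over a finite action set. -/
def simplex (A : Type*) [Fintype A] : Set (A → ℝ) :=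
  {p | (∀ a, 0 ≤ p a) ∧ ∑ a, p a = 1}

/-- **Policy gradient theorem for directional derivatives.** For a finite discounted
MDP and a fixed policy `π` with action-values `Q` and discounted visitation
distribution `d`, there is a constant `C` such that for every policy `π'`,
`V_ρ^{π'} − V_ρ^{π} = (1/(1−γ)) E_{s∼d^π_ρ}[⟨Q_s^π, π'_s − π_s⟩] + O(‖π' − π‖²)`,
i.e. the difference deviates from the linear term by at most `C ‖π' − π‖²`. -/
theorem policy_gradient_directional_derivative
    {S A : Type*} [Fintype S] [Fintype A]
    (γ : ℝ) (hγ0 : 0 ≤ γ) (hγ1 : γ < 1)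
    (r : S → A → ℝ) (P : S → A → S → ℝ)
    (hP0 : ∀ s a s', 0 ≤ P s a s') (hP1 : ∀ s a, ∑ s', P s a s' = 1)
    (ρ : S → ℝ) (hρ0 : ∀ s, 0 ≤ ρ s) (hρ1 : ∑ s, ρ s = 1)
    (π : S → A → ℝ) (hπ : ∀ s, π s ∈ simplex A)
    (Q : S → A → ℝ) (V : S → ℝ)
    (hV : ∀ s, V s = ∑ a, π s a * Q s a)
    (hQ : ∀ s a, Q s a = r s a + γ * ∑ s', P s a s' * V s')
    (d : S → ℝ)
    (hd : ∀ s', d s' = (1 - γ) * ρ s' + γ * ∑ s, ∑ a, d s * π s a * P s a s') :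
    ∃ C : ℝ, 0 ≤ C ∧
      ∀ (π' : S → A → ℝ), (∀ s, π' s ∈ simplex A) →
      ∀ (Q' : S → A → ℝ) (V' : S → ℝ),
        (∀ s, V' s = ∑ a, π' s a * Q' s a) →
        (∀ s a, Q' s a = r s a + γ * ∑ s', P s a s' * V' s') →
        |((∑ s, ρ s * V' s) - (∑ s, ρ s * V s)) -
          (1 / (1 - γ)) * ∑ s, d s * (∑ a, Q s a * (π' s a - π s a))|
          ≤ C * ‖π' - π‖ ^ 2 := by
  classical
  have h1γ : 0 < 1 - γ := by linarith
  by_cases hS : Nonempty S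
  case neg =>
    haveI := not_nonempty_iff.mp hS
    refine ⟨0, le_refl 0, fun π' _ Q' V' _ _ => ?_⟩
    simp [Finset.univ_eq_empty]
  case pos =>
  haveI := hS
  set Qm : ℝ := ∑ s, ∑ a, |Q s a| with hQmdef
  have hQm0 : 0 ≤ Qm := Finset.sum_nonneg fun s _ => Finset.sum_nonneg fun a _ => abs_nonneg _
  set Sd : ℝ := ∑ s, |d s| with hSddef
  have hSd0 : 0 ≤ Sd := Finset.sum_nonneg fun s _ => abs_nonneg _
  refine ⟨γ * Sd * (Fintype.card A) * Qm / (1 - γ) ^ 2, ?_, ?_⟩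
  · apply div_nonneg
    · exact mul_nonneg (mul_nonneg (mul_nonneg hγ0 hSd0) (Nat.cast_nonneg _)) hQm0
    · positivity
  intro π' hπ' Q' V' hV' hQ'
  simp only [simplex, Set.mem_setOf_eq] at hπ'
  set D := ‖π' - π‖ with hDdef
  have hD0 : 0 ≤ D := norm_nonneg _
  have hDb : ∀ s a, |π' s a - π s a| ≤ D := by
    intro s a
    have h1 : |(π' - π) s a| ≤ ‖(π' - π) s‖ := by
      simpa [Real.norm_eq_abs] using norm_le_pi_norm ((π' - π) s) a
    have h2 : ‖(π' - π) s‖ ≤ ‖π' - π‖ := norm_le_pi_norm (π' - π) s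
    simpa [Pi.sub_apply] using h1.trans h2
  -- Step A: value difference recursion
  have hQdiff : ∀ s a, Q' s a - Q s a = γ * ∑ s', P s a s' * (V' s' - V s') := by
    intro s a
    rw [hQ', hQ]
    rw [show (∑ s', P s a s' * (V' s' - V s'))
        = (∑ s', P s a s' * V' s') - ∑ s', P s a s' * V s' by
      rw [← Finset.sum_sub_distrib]; exact Finset.sum_congr rfl fun _ _ => by ring]
    ring
  have stepA : ∀ s, V' s - V s =
      (∑ a, Q s a * (π' s a - π s a)) +
        γ * ∑ s', (∑ a, π' s a * P s a s') * (V' s' - V s') := by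
    intro s
    have h2 : V' s - V s = (∑ a, π' s a * (Q' s a - Q s a)) + ∑ a, (π' s a - π s a) * Q s a := by
      rw [hV', hV, ← Finset.sum_sub_distrib, ← Finset.sum_add_distrib]
      exact Finset.sum_congr rfl fun a _ => by ring
    have h3 : (∑ a, π' s a * (Q' s a - Q s a))
        = γ * ∑ s', (∑ a, π' s a * P s a s') * (V' s' - V s') := by
      simp only [hQdiff, Finset.mul_sum, Finset.sum_mul]
      rw [Finset.sum_comm]
      exact Finset.sum_congr rfl fun s' _ => Finset.sum_congr rfl fun a _ => by ring
    rw [h2, h3, add_comm]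
    congr 1
    exact Finset.sum_congr rfl fun a _ => by ring
  -- split π' = π + (π' - π)
  have hsplit : ∀ s, ∑ s', (∑ a, π' s a * P s a s') * (V' s' - V s')
      = (∑ s', (∑ a, π s a * P s a s') * (V' s' - V s'))
        + ∑ s', (∑ a, (π' s a - π s a) * P s a s') * (V' s' - V s') := by
    intro s
    rw [← Finset.sum_add_distrib]
    refine Finset.sum_congr rfl fun s' _ => ?_
    rw [← add_mul, ← Finset.sum_add_distrib]
    congr 1
    exact Finset.sum_congr rfl fun a _ => by ring
  have hdT : ∀ s', γ * (∑ s, ∑ a, d s * π s a * P s a s') = d s' - (1 - γ) * ρ s' := by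
    intro s'; have := hd s'; linarith
  have e1 : ∑ s, d s * (V' s - V s)
      = (∑ s, d s * ∑ a, Q s a * (π' s a - π s a))
        + γ * (∑ s, d s * ∑ s', (∑ a, π s a * P s a s') * (V' s' - V s'))
        + γ * (∑ s, d s * ∑ s', (∑ a, (π' s a - π s a) * P s a s') * (V' s' - V s')) := by
    rw [Finset.mul_sum, Finset.mul_sum, ← Finset.sum_add_distrib, ← Finset.sum_add_distrib]
    exact Finset.sum_congr rfl fun s _ => by rw [stepA s, hsplit s]; ring
  have e2 : γ * (∑ s, d s * ∑ s', (∑ a, π s a * P s a s') * (V' s' - V s'))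
      = (∑ s, d s * (V' s - V s)) - (1 - γ) * ∑ s, ρ s * (V' s - V s) := by
    have step1 : γ * (∑ s, d s * ∑ s', (∑ a, π s a * P s a s') * (V' s' - V s'))
        = ∑ s', (γ * ∑ s, ∑ a, d s * π s a * P s a s') * (V' s' - V s') := by
      simp only [Finset.mul_sum, Finset.sum_mul]
      rw [Finset.sum_comm]
      exact Finset.sum_congr rfl fun s' _ => Finset.sum_congr rfl fun s _ =>
        Finset.sum_congr rfl fun a _ => by ring
    rw [step1]
    rw [show (∑ s', (γ * ∑ s, ∑ a, d s * π s a * P s a s') * (V' s' - V s'))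
        = ∑ s', (d s' - (1 - γ) * ρ s') * (V' s' - V s') from
      Finset.sum_congr rfl fun s' _ => by rw [hdT s']]
    rw [Finset.mul_sum, ← Finset.sum_sub_distrib]
    exact Finset.sum_congr rfl fun s' _ => by ring
  have key : (1 - γ) * ∑ s, ρ s * (V' s - V s)
      = (∑ s, d s * ∑ a, Q s a * (π' s a - π s a))
        + γ * (∑ s, d s * ∑ s', (∑ a, (π' s a - π s a) * P s a s') * (V' s' - V s')) := by
    linarith [e1, e2]
  -- bounds
  have hgQ : ∀ s, |∑ a, Q s a * (π' s a - π s a)| ≤ Qm * D := by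
    intro s
    calc |∑ a, Q s a * (π' s a - π s a)| ≤ ∑ a, |Q s a * (π' s a - π s a)| :=
          Finset.abs_sum_le_sum_abs _ _
      _ ≤ ∑ a, |Q s a| * D := Finset.sum_le_sum fun a _ => by
          rw [abs_mul]; exact mul_le_mul_of_nonneg_left (hDb s a) (abs_nonneg _)
      _ = (∑ a, |Q s a|) * D := (Finset.sum_mul _ _ _).symm
      _ ≤ Qm * D := mul_le_mul_of_nonneg_right
          (Finset.single_le_sum (f := fun s => ∑ a, |Q s a|)
            (fun s _ => Finset.sum_nonneg fun a _ => abs_nonneg _) (Finset.mem_univ s)) hD0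
  have hrow0 : ∀ s s', 0 ≤ ∑ a, π' s a * P s a s' := fun s s' =>
    Finset.sum_nonneg fun a _ => mul_nonneg ((hπ' s).1 a) (hP0 s a s')
  have hrow1 : ∀ s, ∑ s', ∑ a, π' s a * P s a s' = 1 := by
    intro s
    rw [Finset.sum_comm]
    have h : ∀ a, ∑ s', π' s a * P s a s' = π' s a := fun a => by
      rw [← Finset.mul_sum, hP1, mul_one]
    simp only [h]
    exact (hπ' s).2
  -- sup bound on Δ
  set M : ℝ := Finset.univ.sup' Finset.univ_nonempty (fun s => |V' s - V s|) with hMdef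
  have hMle : ∀ s, |V' s - V s| ≤ M := fun s => Finset.le_sup' (fun s => |V' s - V s|) (Finset.mem_univ s)
  obtain ⟨s0, -, hs0⟩ := Finset.exists_mem_eq_sup' Finset.univ_nonempty (fun s => |V' s - V s|)
  have hM : M ≤ Qm * D + γ * M := by
    have h4 : |∑ s', (∑ a, π' s0 a * P s0 a s') * (V' s' - V s')| ≤ M := by
      calc |∑ s', (∑ a, π' s0 a * P s0 a s') * (V' s' - V s')|
          ≤ ∑ s', |(∑ a, π' s0 a * P s0 a s') * (V' s' - V s')| :=
            Finset.abs_sum_le_sum_abs _ _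
        _ ≤ ∑ s', (∑ a, π' s0 a * P s0 a s') * M := Finset.sum_le_sum fun s' _ => by
            rw [abs_mul, abs_of_nonneg (hrow0 s0 s')]
            exact mul_le_mul_of_nonneg_left (hMle s') (hrow0 s0 s')
        _ = M := by rw [← Finset.sum_mul, hrow1 s0, one_mul]
    calc M = |V' s0 - V s0| := hs0
      _ = |(∑ a, Q s0 a * (π' s0 a - π s0 a))
            + γ * ∑ s', (∑ a, π' s0 a * P s0 a s') * (V' s' - V s')| := by rw [← stepA s0]
      _ ≤ |∑ a, Q s0 a * (π' s0 a - π s0 a)|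
            + |γ * ∑ s', (∑ a, π' s0 a * P s0 a s') * (V' s' - V s')| := abs_add_le _ _
      _ ≤ Qm * D + γ * M := by
          rw [abs_mul, abs_of_nonneg hγ0]
          exact add_le_add (hgQ s0) (mul_le_mul_of_nonneg_left h4 hγ0)
  have hMb : M ≤ Qm * D / (1 - γ) := by
    rw [le_div_iff₀ h1γ]; nlinarith [hM]
  have hΔ : ∀ s, |V' s - V s| ≤ Qm * D / (1 - γ) := fun s => (hMle s).trans hMb
  have hbd0 : (0:ℝ) ≤ Qm * D / (1 - γ) := div_nonneg (mul_nonneg hQm0 hD0) h1γ.le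
  -- bound on E
  have hE : |∑ s, d s * ∑ s', (∑ a, (π' s a - π s a) * P s a s') * (V' s' - V s')|
      ≤ Sd * ((Fintype.card A) * D * (Qm * D / (1 - γ))) := by
    have hinner : ∀ s, |∑ s', (∑ a, (π' s a - π s a) * P s a s') * (V' s' - V s')|
        ≤ (Fintype.card A) * D * (Qm * D / (1 - γ)) := by
      intro s
      calc |∑ s', (∑ a, (π' s a - π s a) * P s a s') * (V' s' - V s')|
          ≤ ∑ s', |(∑ a, (π' s a - π s a) * P s a s') * (V' s' - V s')| :=
            Finset.abs_sum_le_sum_abs _ _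
        _ ≤ ∑ s', (∑ a, |π' s a - π s a| * P s a s') * (Qm * D / (1 - γ)) := by
            refine Finset.sum_le_sum fun s' _ => ?_
            rw [abs_mul]
            refine mul_le_mul ?_ (hΔ s') (abs_nonneg _)
              (Finset.sum_nonneg fun a _ => mul_nonneg (abs_nonneg _) (hP0 s a s'))
            calc |∑ a, (π' s a - π s a) * P s a s'|
                ≤ ∑ a, |(π' s a - π s a) * P s a s'| := Finset.abs_sum_le_sum_abs _ _
              _ = ∑ a, |π' s a - π s a| * P s a s' := Finset.sum_congr rfl fun a _ => by
                  rw [abs_mul, abs_of_nonneg (hP0 s a s')]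
        _ = (∑ s', ∑ a, |π' s a - π s a| * P s a s') * (Qm * D / (1 - γ)) :=
            (Finset.sum_mul _ _ _).symm
        _ ≤ (Fintype.card A) * D * (Qm * D / (1 - γ)) := by
            refine mul_le_mul_of_nonneg_right ?_ hbd0
            rw [Finset.sum_comm]
            calc ∑ a, ∑ s', |π' s a - π s a| * P s a s'
                = ∑ a, |π' s a - π s a| := Finset.sum_congr rfl fun a _ => by
                  rw [← Finset.mul_sum, hP1, mul_one]
              _ ≤ ∑ a : A, D := Finset.sum_le_sum fun a _ => hDb s a
              _ = (Fintype.card A) * D := by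
                  rw [Finset.sum_const, Finset.card_univ, nsmul_eq_mul]
    calc |∑ s, d s * ∑ s', (∑ a, (π' s a - π s a) * P s a s') * (V' s' - V s')|
        ≤ ∑ s, |d s * ∑ s', (∑ a, (π' s a - π s a) * P s a s') * (V' s' - V s')| :=
          Finset.abs_sum_le_sum_abs _ _
      _ ≤ ∑ s, |d s| * ((Fintype.card A) * D * (Qm * D / (1 - γ))) :=
          Finset.sum_le_sum fun s _ => by
            rw [abs_mul]; exact mul_le_mul_of_nonneg_left (hinner s) (abs_nonneg _)
      _ = Sd * ((Fintype.card A) * D * (Qm * D / (1 - γ))) := (Finset.sum_mul _ _ _).symm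
  -- finish
  have hρΔ : (∑ s, ρ s * V' s) - ∑ s, ρ s * V s = ∑ s, ρ s * (V' s - V s) := by
    rw [← Finset.sum_sub_distrib]; exact Finset.sum_congr rfl fun s _ => (mul_sub _ _ _).symm
  have hgoal : ((∑ s, ρ s * V' s) - (∑ s, ρ s * V s)) -
        (1 / (1 - γ)) * ∑ s, d s * (∑ a, Q s a * (π' s a - π s a))
      = (γ / (1 - γ)) * ∑ s, d s * ∑ s', (∑ a, (π' s a - π s a) * P s a s') * (V' s' - V s') := by
    rw [hρΔ]
    have h5 : ∑ s, ρ s * (V' s - V s)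
        = ((∑ s, d s * ∑ a, Q s a * (π' s a - π s a))
            + γ * (∑ s, d s * ∑ s', (∑ a, (π' s a - π s a) * P s a s') * (V' s' - V s'))) / (1 - γ) := by
      rw [eq_div_iff h1γ.ne']; linarith [key]
    rw [h5]
    field_simp
    ring
  rw [hgoal, abs_mul, abs_of_nonneg (div_nonneg hγ0 h1γ.le)]
  calc (γ / (1 - γ)) * |∑ s, d s * ∑ s', (∑ a, (π' s a - π s a) * P s a s') * (V' s' - V s')|
      ≤ (γ / (1 - γ)) * (Sd * ((Fintype.card A) * D * (Qm * D / (1 - γ)))) :=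
        mul_le_mul_of_nonneg_left hE (div_nonneg hγ0 h1γ.le)
    _ = γ * Sd * (Fintype.card A) * Qm / (1 - γ) ^ 2 * D ^ 2 := by
        field_simp
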